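/- Let α ∈ (0,1), ε ∈ (0,1], and let V : ℝ → ℝ be C³ with (1+|z|)^α |V''(z)| ≤ M for all z. Define D_ε(V')(y₁,y₂,z) = V'(z/2) − ½ V'(z/2 + εy₁) − ½ V'(z/2 + εy₂). Then for all z, y₁, y₂: (1+|z|)^α |D_ε(V')(y₁,y₂,z)| ≤ ε 2^α M (|y₁| + |y₂| + ε^α |y₁|^{1+α} + ε^α |y₂|^{1+α}). -/

import Mathlib

open Real

lemma add_rpow_le_rpow_add_aux {u v p : ℝ} (hu : 0 ≤ u) (hv : 0 ≤ v)
    (hp : 0 ≤ p) (hp1 : p ≤ 1) : (u + v) ^ p ≤ u ^ p + v ^ p := by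
  have h := NNReal.rpow_add_le_add_rpow u.toNNReal v.toNNReal hp hp1
  have h2 := NNReal.coe_le_coe.2 h
  rw [← Real.toNNReal_add hu hv] at h2
  rwa [NNReal.coe_add, NNReal.coe_rpow, NNReal.coe_rpow, NNReal.coe_rpow,
    Real.coe_toNNReal _ hu, Real.coe_toNNReal _ hv,
    Real.coe_toNNReal _ (add_nonneg hu hv)] at h2

theorem weighted_estimate_first_derivative
    (α ε : ℝ) (hα0 : 0 < α) (hα1 : α < 1) (hε0 : 0 < ε) (hε1 : ε ≤ 1)
    (V : ℝ → ℝ) (M : ℝ) (hV : ContDiff ℝ 3 V)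
    (hM : ∀ z : ℝ, (1 + |z|) ^ α * |iteratedDeriv 2 V z| ≤ M) :
    ∀ z y₁ y₂ : ℝ,
      (1 + |z|) ^ α *
        |deriv V (z / 2) - (1 / 2) * deriv V (z / 2 + ε * y₁)
          - (1 / 2) * deriv V (z / 2 + ε * y₂)|
      ≤ ε * (2 : ℝ) ^ α * M *
          (|y₁| + |y₂| + ε ^ α * |y₁| ^ (1 + α) + ε ^ α * |y₂| ^ (1 + α)) := by
  intro z y₁ y₂
  have hM0 : 0 ≤ M := le_trans (by positivity) (hM 0)
  -- f = V', C²
  set f := deriv V with hfdef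
  have hV3 : ContDiff ℝ ((2 : ℕ) + 1) V := by exact_mod_cast hV
  have hf2 : ContDiff ℝ 2 f := ((contDiff_succ_iff_deriv.mp hV3).2.2)
  have hderiv : ∀ x : ℝ, HasDerivAt f (iteratedDeriv 2 V x) x := by
    intro x
    have h1 : iteratedDeriv 2 V = deriv f := by
      rw [iteratedDeriv_succ, iteratedDeriv_one]
    rw [h1]
    exact ((hf2.differentiable (by norm_num)) x).hasDerivAt
  set a := z / 2 with ha
  have hw2 : (1 + |z|) ^ α ≤ 2 ^ α * (1 + |a|) ^ α := by
    have h1 : 1 + |z| ≤ 2 * (1 + |a|) := by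
      have : |z| = 2 * |a| := by
        rw [ha, abs_div]
        simp [abs_of_nonneg]
        ring
      linarith
    calc (1 + |z|) ^ α ≤ (2 * (1 + |a|)) ^ α :=
          Real.rpow_le_rpow (by positivity) h1 hα0.le
      _ = 2 ^ α * (1 + |a|) ^ α :=
          Real.mul_rpow (by norm_num) (by positivity)
  -- key estimate for one term
  have key : ∀ y : ℝ, (1 + |z|) ^ α * |f a - f (a + ε * y)| ≤
      ε * 2 ^ α * M * (|y| + ε ^ α * |y| ^ (1 + α)) := by
    intro y
    set b := a + ε * y with hb
    set C : ℝ := M * (1 + (ε * |y|) ^ α) / (1 + |a|) ^ α with hC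
    have hpa : (0 : ℝ) < (1 + |a|) ^ α := by positivity
    have bound : ∀ x ∈ segment ℝ a b, ‖iteratedDeriv 2 V x‖ ≤ C := by
      intro x hx
      rcases segment_eq_image' ℝ a b ▸ hx with ⟨t, ht, rfl⟩
      have hxa : |(a + t • (b - a)) - a| ≤ ε * |y| := by
        simp only [smul_eq_mul, add_sub_cancel_left, abs_mul]
        have : |b - a| = ε * |y| := by
          rw [hb]; simp [abs_mul, abs_of_pos hε0]
        rw [this]
        have h01 : |t| ≤ 1 := by rw [abs_of_nonneg ht.1]; exact ht.2
        nlinarith [mul_le_mul_of_nonneg_right h01 (mul_nonneg hε0.le (abs_nonneg y)), abs_nonneg y]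
      set x := a + t • (b - a)
      have h1 : 1 + |a| ≤ (1 + |x|) + ε * |y| := by
        have := abs_sub_abs_le_abs_sub a x
        rw [abs_sub_comm] at hxa
        linarith
      have h2 : (1 + |a|) ^ α ≤ (1 + |x|) ^ α + (ε * |y|) ^ α := by
        calc (1 + |a|) ^ α ≤ ((1 + |x|) + ε * |y|) ^ α :=
              Real.rpow_le_rpow (by positivity) h1 hα0.le
          _ ≤ (1 + |x|) ^ α + (ε * |y|) ^ α :=
              add_rpow_le_rpow_add_aux (by positivity) (by positivity) hα0.le hα1.le
      have h3 : (1 + |a|) ^ α ≤ (1 + |x|) ^ α * (1 + (ε * |y|) ^ α) := by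
        have hx1 : (1 : ℝ) ≤ (1 + |x|) ^ α := by
          calc (1:ℝ) = 1 ^ α := (Real.one_rpow α).symm
            _ ≤ (1 + |x|) ^ α := Real.rpow_le_rpow (by norm_num) (by linarith [abs_nonneg x]) hα0.le
        nlinarith [Real.rpow_nonneg (mul_nonneg hε0.le (abs_nonneg y)) α]
      have h4 : |iteratedDeriv 2 V x| * (1 + |a|) ^ α ≤ M * (1 + (ε * |y|) ^ α) := by
        calc |iteratedDeriv 2 V x| * (1 + |a|) ^ α
            ≤ |iteratedDeriv 2 V x| * ((1 + |x|) ^ α * (1 + (ε * |y|) ^ α)) := by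
              exact mul_le_mul_of_nonneg_left h3 (abs_nonneg _)
          _ = ((1 + |x|) ^ α * |iteratedDeriv 2 V x|) * (1 + (ε * |y|) ^ α) := by ring
          _ ≤ M * (1 + (ε * |y|) ^ α) := by
              apply mul_le_mul_of_nonneg_right (hM x)
              positivity
      rw [Real.norm_eq_abs, hC, le_div_iff₀ hpa]
      exact h4
    have mvt := (convex_segment a b).norm_image_sub_le_of_norm_hasDerivWithin_le
      (fun x _ => (hderiv x).hasDerivWithinAt) bound
      (right_mem_segment ℝ a b) (left_mem_segment ℝ a b)
    simp only [Real.norm_eq_abs] at mvt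
    -- mvt : |f a - f b| ≤ C * |a - b|
    have hab : |a - b| = ε * |y| := by
      rw [hb]; simp [abs_mul, abs_of_pos hε0]
    rw [hab] at mvt
    have hCval : (1 + |a|) ^ α * (C * (ε * |y|)) =
        ε * M * (1 + (ε * |y|) ^ α) * |y| := by
      rw [hC]; field_simp
    calc (1 + |z|) ^ α * |f a - f (a + ε * y)|
        ≤ (2 ^ α * (1 + |a|) ^ α) * (C * (ε * |y|)) := by
          apply mul_le_mul hw2 mvt (abs_nonneg _)
          positivity
      _ = 2 ^ α * (ε * M * (1 + (ε * |y|) ^ α) * |y|) := by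
          rw [mul_assoc, hCval]
      _ = ε * 2 ^ α * M * (|y| + ε ^ α * |y| ^ (1 + α)) := by
          have h5 : (ε * |y|) ^ α = ε ^ α * |y| ^ α :=
            Real.mul_rpow hε0.le (abs_nonneg y)
          have h6 : |y| ^ (1 + α) = |y| * |y| ^ α := by
            rw [Real.rpow_add' (abs_nonneg y) (by positivity), Real.rpow_one]
          rw [h5, h6]; ring
  -- assemble
  have hsplit : deriv V a - (1 / 2) * deriv V (a + ε * y₁) - (1 / 2) * deriv V (a + ε * y₂)
      = (1 / 2) * (f a - f (a + ε * y₁)) + (1 / 2) * (f a - f (a + ε * y₂)) := by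
    rw [hfdef]; ring
  have habs : |deriv V a - (1 / 2) * deriv V (a + ε * y₁) - (1 / 2) * deriv V (a + ε * y₂)|
      ≤ (1 / 2) * |f a - f (a + ε * y₁)| + (1 / 2) * |f a - f (a + ε * y₂)| := by
    rw [hsplit]
    calc _ ≤ |(1 / 2) * (f a - f (a + ε * y₁))| + |(1 / 2) * (f a - f (a + ε * y₂))| :=
          abs_add_le _ _
      _ = _ := by rw [abs_mul, abs_mul, abs_of_nonneg (by norm_num : (0:ℝ) ≤ 1/2)]
  have hw0 : (0 : ℝ) ≤ (1 + |z|) ^ α := by positivity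
  have k1 := key y₁
  have k2 := key y₂
  have hK0 : (0 : ℝ) ≤ ε * 2 ^ α * M := by positivity
  have hT1 : (0 : ℝ) ≤ |y₁| + ε ^ α * |y₁| ^ (1 + α) := by positivity
  have hT2 : (0 : ℝ) ≤ |y₂| + ε ^ α * |y₂| ^ (1 + α) := by positivity
  have main : (1 + |z|) ^ α *
      |deriv V a - (1 / 2) * deriv V (a + ε * y₁) - (1 / 2) * deriv V (a + ε * y₂)|
      ≤ ε * 2 ^ α * M * (|y₁| + |y₂| + ε ^ α * |y₁| ^ (1 + α) + ε ^ α * |y₂| ^ (1 + α)) := by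
    have step : (1 + |z|) ^ α *
        |deriv V a - (1 / 2) * deriv V (a + ε * y₁) - (1 / 2) * deriv V (a + ε * y₂)|
        ≤ (1 / 2) * ((1 + |z|) ^ α * |f a - f (a + ε * y₁)|)
          + (1 / 2) * ((1 + |z|) ^ α * |f a - f (a + ε * y₂)|) := by
      have := mul_le_mul_of_nonneg_left habs hw0
      linarith
    nlinarith [mul_nonneg hK0 hT1, mul_nonneg hK0 hT2]
  exact main
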